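/- arXiv:1606.01082 — 7 statements merged into one kernel-verified Lean document; each statement's English description precedes it below -/
import Mathlib

section
/- If b = 0, then the derived subalgebra [L_0, L_0] equals L_1, where L_n = span{L_i, H_i : i ≥ n}. -/
/-- The span of brackets [A, B] of two subspaces of a Lie algebra. -/
def bracketSpan {g : Type*} [LieRing g] [LieAlgebra ℂ g]
    (A B : Submodule ℂ g) : Submodule ℂ g :=
  Submodule.span ℂ {z | ∃ x ∈ A, ∃ y ∈ B, z = ⁅x, y⁆}

/-- The filtration subspace L_n = span{L_i, H_i : i ≥ n}. -/
def filtSub (g : Type*) [AddCommGroup g] [Module ℂ g] (L H : ℤ → g) (n : ℤ) :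
    Submodule ℂ g :=
  Submodule.span ℂ
    ({x | ∃ i : ℤ, n ≤ i ∧ -1 ≤ i ∧ x = L i} ∪ {x | ∃ i : ℤ, n ≤ i ∧ 0 ≤ i ∧ x = H i})

/- If b = 0, the derived subalgebra [L_0, L_0] equals L_1, for the Lie algebra
with basis {L_i : i ≥ -1} ∪ {H_j : j ≥ 0} and brackets
[L_m, L_n] = (m-n)L_{m+n}, [L_m, H_n] = -n H_{m+n}, [H_m, H_n] = 0. -/
theorem derived_L0_eq_L1_b_zero
    (g : Type*) [LieRing g] [LieAlgebra ℂ g] (L H : ℤ → g)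
    (hH0 : ∀ n : ℤ, n < 0 → H n = 0)
    (hLL : ∀ m n : ℤ, -1 ≤ m → -1 ≤ n →
      ⁅L m, L n⁆ = ((m - n : ℤ) : ℂ) • L (m + n))
    (hLH : ∀ m n : ℤ, -1 ≤ m → 0 ≤ n →
      ⁅L m, H n⁆ = (-(n : ℂ)) • H (m + n))
    (hHH : ∀ m n : ℤ, 0 ≤ m → 0 ≤ n → ⁅H m, H n⁆ = 0) :
    bracketSpan (filtSub g L H 0) (filtSub g L H 0) = filtSub g L H 1 := by
  have memL : ∀ n i : ℤ, n ≤ i → -1 ≤ i → L i ∈ filtSub g L H n := fun n i h1 h2 =>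
    Submodule.subset_span (Or.inl ⟨i, h1, h2, rfl⟩)
  have memH : ∀ n i : ℤ, n ≤ i → 0 ≤ i → H i ∈ filtSub g L H n := fun n i h1 h2 =>
    Submodule.subset_span (Or.inr ⟨i, h1, h2, rfl⟩)
  apply le_antisymm
  · rw [bracketSpan, Submodule.span_le]
    rintro z ⟨x, hx, y, hy, rfl⟩
    -- show ⁅x, y⁆ ∈ filtSub g L H 1
    have key : ∀ x ∈ ({x | ∃ i : ℤ, 0 ≤ i ∧ -1 ≤ i ∧ x = L i} ∪
        {x | ∃ i : ℤ, 0 ≤ i ∧ 0 ≤ i ∧ x = H i} : Set g),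
        ∀ y ∈ ({x | ∃ i : ℤ, 0 ≤ i ∧ -1 ≤ i ∧ x = L i} ∪
        {x | ∃ i : ℤ, 0 ≤ i ∧ 0 ≤ i ∧ x = H i} : Set g),
        ⁅x, y⁆ ∈ filtSub g L H 1 := by
      rintro x (⟨m, hm0, hm1, rfl⟩ | ⟨m, hm0, _, rfl⟩) y
        (⟨n, hn0, hn1, rfl⟩ | ⟨n, hn0, _, rfl⟩)
      · rw [hLL m n (by omega) (by omega)]
        by_cases h : 1 ≤ m + n
        · exact Submodule.smul_mem _ _ (memL 1 (m + n) h (by omega))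
        · have hm : m = 0 := by omega
          have hn : n = 0 := by omega
          subst hm; subst hn; simp
      · rw [hLH m n (by omega) hn0]
        by_cases h : 1 ≤ n
        · exact Submodule.smul_mem _ _ (memH 1 (m + n) (by omega) (by omega))
        · have hn : n = 0 := by omega
          subst hn; simp
      · rw [← lie_skew, hLH n m (by omega) hm0]
        by_cases h : 1 ≤ m
        · exact Submodule.neg_mem _
            (Submodule.smul_mem _ _ (memH 1 (n + m) (by omega) (by omega)))
        · have hm : m = 0 := by omega
          subst hm; simp
      · rw [hHH m n hm0 hn0]; exact Submodule.zero_mem _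
    have hx' : x ∈ filtSub g L H 0 := hx
    have hy' : y ∈ filtSub g L H 0 := hy
    rw [filtSub] at hx' hy'
    induction hx' using Submodule.span_induction generalizing y with
    | mem a ha =>
      induction hy' using Submodule.span_induction with
      | mem b hb => exact key a ha b hb
      | zero => simp
      | add b c hb hc ihb ihc =>
        rw [lie_add]; exact Submodule.add_mem _ (ihb hb) (ihc hc)
      | smul c b hb ihb =>
        rw [lie_smul]; exact Submodule.smul_mem _ _ (ihb hb)
    | zero => simp
    | add a b ha hb iha ihb =>
      rw [add_lie]
      exact Submodule.add_mem _ (iha ha y hy hy') (ihb hb y hy hy')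
    | smul c a ha iha =>
      rw [smul_lie]; exact Submodule.smul_mem _ _ (iha ha y hy hy')
  · rw [show filtSub g L H 1 = Submodule.span ℂ
      ({x | ∃ i : ℤ, 1 ≤ i ∧ -1 ≤ i ∧ x = L i} ∪ {x | ∃ i : ℤ, 1 ≤ i ∧ 0 ≤ i ∧ x = H i})
      from rfl, Submodule.span_le]
    rintro x (⟨i, hi1, hi2, rfl⟩ | ⟨i, hi1, hi2, rfl⟩)
    · have hb : ⁅L 0, L i⁆ ∈ bracketSpan (filtSub g L H 0) (filtSub g L H 0) :=
        Submodule.subset_span ⟨L 0, memL 0 0 le_rfl (by omega), L i,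
          memL 0 i (by omega) hi2, rfl⟩
      have heq : ⁅L 0, L i⁆ = ((0 - i : ℤ) : ℂ) • L i := by
        rw [hLL 0 i (by omega) hi2, zero_add]
      have hiC : ((0 - i : ℤ) : ℂ) ≠ 0 := by
        simp only [zero_sub, Int.cast_neg, ne_eq, neg_eq_zero, Int.cast_eq_zero]
        omega
      have := Submodule.smul_mem _ (((0 - i : ℤ) : ℂ)⁻¹) hb
      rwa [heq, smul_smul, inv_mul_cancel₀ hiC, one_smul] at this
    · have hb : ⁅L 0, H i⁆ ∈ bracketSpan (filtSub g L H 0) (filtSub g L H 0) :=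
        Submodule.subset_span ⟨L 0, memL 0 0 le_rfl (by omega), H i,
          memH 0 i (by omega) hi2, rfl⟩
      have heq : ⁅L 0, H i⁆ = (-(i : ℂ)) • H i := by
        rw [hLH 0 i (by omega) hi2, zero_add]
      have hiC : (-(i : ℂ)) ≠ 0 := by
        simp only [ne_eq, neg_eq_zero, Int.cast_eq_zero]; omega
      have := Submodule.smul_mem _ ((-(i : ℂ))⁻¹) hb
      rwa [heq, smul_smul, inv_mul_cancel₀ hiC, one_smul] at this
end

section
/- If b ≠ 0, then the derived subalgebra [L_0, L_0] equals ℂH_0 ⊕ L_1, where L_n = span{L_i, H_i : i ≥ n}. -/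
theorem derived_L0_b_ne_zero
    (g : Type*) [LieRing g] [LieAlgebra ℂ g] (b : ℂ) (hb : b ≠ 0) (L H : ℤ → g)
    (hH0 : ∀ n : ℤ, n < 0 → H n = 0)
    (hLL : ∀ m n : ℤ, -1 ≤ m → -1 ≤ n →
      ⁅L m, L n⁆ = ((m - n : ℤ) : ℂ) • L (m + n))
    (hLH : ∀ m n : ℤ, -1 ≤ m → 0 ≤ n →
      ⁅L m, H n⁆ = (-(b * (m : ℂ) + (n : ℂ) + b)) • H (m + n))
    (hHH : ∀ m n : ℤ, 0 ≤ m → 0 ≤ n → ⁅H m, H n⁆ = 0)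
    (hind : LinearIndependent ℂ
      (fun p : {i : ℤ // -1 ≤ i} ⊕ {j : ℤ // 0 ≤ j} =>
        Sum.elim (fun i => L i.1) (fun j => H j.1) p)) :
    bracketSpan (filtSub g L H 0) (filtSub g L H 0)
        = Submodule.span ℂ {H 0} ⊔ filtSub g L H 1 ∧
    Submodule.span ℂ {H 0} ⊓ filtSub g L H 1 = ⊥ := by
  have hLmem : ∀ (n i : ℤ), n ≤ i → -1 ≤ i → L i ∈ filtSub g L H n := fun n i h1 h2 =>
    Submodule.subset_span (Or.inl ⟨i, h1, h2, rfl⟩)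
  have hHmem : ∀ (n i : ℤ), n ≤ i → 0 ≤ i → H i ∈ filtSub g L H n := fun n i h1 h2 =>
    Submodule.subset_span (Or.inr ⟨i, h1, h2, rfl⟩)
  set M : Submodule ℂ g := Submodule.span ℂ {H 0} ⊔ filtSub g L H 1 with hM
  set BS : Submodule ℂ g := bracketSpan (filtSub g L H 0) (filtSub g L H 0) with hBS
  have hH0M : H 0 ∈ M := Submodule.mem_sup_left (Submodule.mem_span_singleton_self _)
  -- generator-generator brackets land in M
  have hLLmem : ∀ m n : ℤ, 0 ≤ m → 0 ≤ n → ⁅L m, L n⁆ ∈ M := by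
    intro m n hm hn
    rw [hLL m n (by linarith) (by linarith)]
    rcases lt_or_ge (m + n) 1 with h | h
    · have hm0 : m = 0 := by omega
      have hn0 : n = 0 := by omega
      subst hm0; subst hn0; simp
    · exact Submodule.smul_mem _ _ (Submodule.mem_sup_right (hLmem 1 (m + n) h (by omega)))
  have hLHmem : ∀ m n : ℤ, 0 ≤ m → 0 ≤ n → ⁅L m, H n⁆ ∈ M := by
    intro m n hm hn
    rw [hLH m n (by linarith) hn]
    rcases lt_or_ge (m + n) 1 with h | h
    · have hm0 : m = 0 := by omega
      have hn0 : n = 0 := by omega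
      subst hm0; subst hn0
      exact Submodule.smul_mem _ _ hH0M
    · exact Submodule.smul_mem _ _ (Submodule.mem_sup_right (hHmem 1 (m + n) h (by omega)))
  set S0 : Set g := ({x | ∃ i : ℤ, 0 ≤ i ∧ -1 ≤ i ∧ x = L i} ∪
      {x | ∃ i : ℤ, 0 ≤ i ∧ 0 ≤ i ∧ x = H i}) with hS0
  have hfilt0 : filtSub g L H 0 = Submodule.span ℂ S0 := rfl
  have hgen : ∀ x ∈ S0, ∀ y ∈ S0, ⁅x, y⁆ ∈ M := by
    rintro x (⟨m, hm, -, rfl⟩ | ⟨m, hm, -, rfl⟩) y (⟨n, hn, -, rfl⟩ | ⟨n, hn, -, rfl⟩)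
    · exact hLLmem m n hm hn
    · exact hLHmem m n hm hn
    · rw [← lie_skew]; exact neg_mem (hLHmem n m hn hm)
    · rw [hHH m n hm hn]; exact zero_mem _
  -- bilinear lift
  have hbr : ∀ x ∈ filtSub g L H 0, ∀ y ∈ filtSub g L H 0, ⁅x, y⁆ ∈ M := by
    intro x hx
    rw [hfilt0] at hx
    induction hx using Submodule.span_induction with
    | mem x hxS =>
      intro y hy
      rw [hfilt0] at hy
      induction hy using Submodule.span_induction with
      | mem y hyS => exact hgen x hxS y hyS
      | zero => rw [lie_zero]; exact zero_mem _
      | add y z _ _ h1 h2 => rw [lie_add]; exact add_mem h1 h2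
      | smul c y _ h1 => rw [lie_smul]; exact Submodule.smul_mem _ _ h1
    | zero => intro y hy; rw [zero_lie]; exact zero_mem _
    | add x z _ _ h1 h2 => intro y hy; rw [add_lie]; exact add_mem (h1 y hy) (h2 y hy)
    | smul c x _ h1 => intro y hy; rw [smul_lie]; exact Submodule.smul_mem _ _ (h1 y hy)
  have hfwd : BS ≤ M := by
    rw [hBS, bracketSpan]
    apply Submodule.span_le.mpr
    rintro z ⟨x, hx, y, hy, rfl⟩
    exact hbr x hx y hy
  -- reverse inclusion
  have hmemBS : ∀ x ∈ filtSub g L H 0, ∀ y ∈ filtSub g L H 0, ⁅x, y⁆ ∈ BS :=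
    fun x hx y hy => Submodule.subset_span ⟨x, hx, y, hy, rfl⟩
  have hsm : ∀ (c : ℂ) (x : g), c ≠ 0 → c • x ∈ BS → x ∈ BS := by
    intro c x hc h
    have h2 := Submodule.smul_mem BS c⁻¹ h
    rwa [smul_smul, inv_mul_cancel₀ hc, one_smul] at h2
  have hH0BS : H 0 ∈ BS := by
    have h1 := hmemBS (L 0) (hLmem 0 0 le_rfl (by norm_num)) (H 0) (hHmem 0 0 le_rfl le_rfl)
    rw [hLH 0 0 (by norm_num) le_rfl,
      show -(b * ((0:ℤ) : ℂ) + ((0:ℤ) : ℂ) + b) = -b by push_cast; ring,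
      show (0:ℤ) + (0:ℤ) = 0 from rfl] at h1
    exact hsm (-b) _ (neg_ne_zero.mpr hb) h1
  have hbwd : M ≤ BS := by
    rw [hM]
    apply sup_le
    · rw [Submodule.span_le]
      rintro x hx
      rw [Set.mem_singleton_iff] at hx
      subst hx; exact hH0BS
    · rw [show filtSub g L H 1 = Submodule.span ℂ
        ({x | ∃ i : ℤ, 1 ≤ i ∧ -1 ≤ i ∧ x = L i} ∪
         {x | ∃ i : ℤ, 1 ≤ i ∧ 0 ≤ i ∧ x = H i}) from rfl, Submodule.span_le]
      rintro x (⟨i, hi, hi2, rfl⟩ | ⟨i, hi, hi2, rfl⟩)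
      · have h1 := hmemBS (L 0) (hLmem 0 0 le_rfl (by norm_num)) (L i)
          (hLmem 0 i (by omega) hi2)
        rw [hLL 0 i (by norm_num) hi2, zero_add] at h1
        refine hsm _ _ ?_ h1
        exact Int.cast_ne_zero.mpr (by omega)
      · by_cases hc : (i : ℂ) + b = 0
        · have h1 := hmemBS (L i) (hLmem 0 i (by omega) (by omega)) (H 0)
            (hHmem 0 0 le_rfl le_rfl)
          rw [hLH i 0 (by omega) le_rfl, add_zero] at h1
          refine hsm _ _ ?_ h1
          intro h
          have hb' : b = -(i : ℂ) := by linear_combination hc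
          rw [hb'] at h
          have h2 : (i : ℂ) * ((i : ℂ) + 1) = 0 := by push_cast at h ⊢; linear_combination h
          rcases mul_eq_zero.mp h2 with h3 | h3
          · exact (Int.cast_ne_zero.mpr (by omega : i ≠ 0)) h3
          · have h4 : ((i + 1 : ℤ) : ℂ) = 0 := by push_cast; linear_combination h3
            exact (Int.cast_ne_zero.mpr (by omega : i + 1 ≠ 0)) h4
        · have h1 := hmemBS (L 0) (hLmem 0 0 le_rfl (by norm_num)) (H i)
            (hHmem 0 i (by omega) hi2)
          rw [hLH 0 i (by norm_num) hi2, zero_add] at h1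
          refine hsm _ _ ?_ h1
          intro h; apply hc
          have : -(b * ((0:ℤ) : ℂ) + (i : ℂ) + b) = -((i:ℂ) + b) := by push_cast; ring
          rw [this, neg_eq_zero] at h
          exact h
  refine ⟨le_antisymm hfwd hbwd, ?_⟩
  -- direct sum part
  set v : {i : ℤ // -1 ≤ i} ⊕ {j : ℤ // 0 ≤ j} → g :=
    fun p => Sum.elim (fun i => L i.1) (fun j => H j.1) p with hv
  set a : {i : ℤ // -1 ≤ i} ⊕ {j : ℤ // 0 ≤ j} := Sum.inr ⟨0, le_rfl⟩ with ha
  have hdisj := hind.disjoint_span_image (s := {a}) (t := {a}ᶜ) disjoint_compl_right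
  have hle1 : Submodule.span ℂ {H 0} ≤ Submodule.span ℂ (v '' {a}) := by
    rw [Set.image_singleton]
    exact le_of_eq rfl
  have hle2 : filtSub g L H 1 ≤ Submodule.span ℂ (v '' {a}ᶜ) := by
    rw [show filtSub g L H 1 = Submodule.span ℂ
        ({x | ∃ i : ℤ, 1 ≤ i ∧ -1 ≤ i ∧ x = L i} ∪
         {x | ∃ i : ℤ, 1 ≤ i ∧ 0 ≤ i ∧ x = H i}) from rfl, Submodule.span_le]
    rintro x (⟨i, hi, hi2, rfl⟩ | ⟨i, hi, hi2, rfl⟩)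
    · refine Submodule.subset_span ⟨Sum.inl ⟨i, hi2⟩, ?_, rfl⟩
      simp [ha]
    · refine Submodule.subset_span ⟨Sum.inr ⟨i, hi2⟩, ?_, rfl⟩
      simp only [Set.mem_compl_iff, Set.mem_singleton_iff, ha]
      intro hcon
      have := Sum.inr_injective hcon
      have : i = 0 := congrArg Subtype.val this
      omega
  exact disjoint_iff.mp (hdisj.mono hle1 hle2)
end

section
/- If b ≠ 0, then the 2n-th term of the derived series of L_0 is contained in L_n for every n ≥ 0. -/
/-- The derived series of the subspace L_0: D 0 = L_0, D (k+1) = [D k, D k]. -/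
def derivedSeq (g : Type*) [LieRing g] [LieAlgebra ℂ g] (L H : ℤ → g) : ℕ → Submodule ℂ g
  | 0 => filtSub g L H 0
  | k + 1 => bracketSpan (derivedSeq g L H k) (derivedSeq g L H k)

namespace DSaux

variable {g : Type*} [LieRing g] [LieAlgebra ℂ g]

/-- Generalized filtration: L-indices ≥ a, H-indices ≥ c. -/
def G (L H : ℤ → g) (a c : ℤ) : Submodule ℂ g :=
  Submodule.span ℂ
    ({x | ∃ i : ℤ, a ≤ i ∧ -1 ≤ i ∧ x = L i} ∪ {x | ∃ i : ℤ, c ≤ i ∧ 0 ≤ i ∧ x = H i})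

lemma filt_eq (L H : ℤ → g) (n : ℤ) : filtSub g L H n = G L H n n := rfl

lemma G_mono (L H : ℤ → g) {a a' c c' : ℤ} (ha : a ≤ a') (hc : c ≤ c') :
    G L H a' c' ≤ G L H a c := by
  apply Submodule.span_mono
  rintro x (⟨i, hi, h1, rfl⟩ | ⟨i, hi, h0, rfl⟩)
  · exact Or.inl ⟨i, le_trans ha hi, h1, rfl⟩
  · exact Or.inr ⟨i, le_trans hc hi, h0, rfl⟩

lemma bracketSpan_mono {A A' B B' : Submodule ℂ g} (hA : A ≤ A') (hB : B ≤ B') :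
    bracketSpan A B ≤ bracketSpan A' B' := by
  apply Submodule.span_mono
  rintro z ⟨x, hx, y, hy, rfl⟩
  exact ⟨x, hA hx, y, hB hy, rfl⟩

lemma lie_span_le {S : Set g} {T : Submodule ℂ g}
    (h : ∀ x ∈ S, ∀ y ∈ S, ⁅x, y⁆ ∈ T) :
    ∀ x ∈ Submodule.span ℂ S, ∀ y ∈ Submodule.span ℂ S, ⁅x, y⁆ ∈ T := by
  intro x hx
  induction hx using Submodule.span_induction with
  | mem a ha =>
      intro y hy
      induction hy using Submodule.span_induction with
      | mem c hc => exact h a ha c hc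
      | zero => simp
      | add u v _ _ hu hv => rw [lie_add]; exact T.add_mem hu hv
      | smul t u _ hu => rw [lie_smul]; exact T.smul_mem t hu
  | zero => intro y hy; simp
  | add u v _ _ hu hv => intro y hy; rw [add_lie]; exact T.add_mem (hu y hy) (hv y hy)
  | smul t u _ hu => intro y hy; rw [smul_lie]; exact T.smul_mem t (hu y hy)

lemma bstep (b : ℂ) (L H : ℤ → g)
    (hLL : ∀ m n : ℤ, -1 ≤ m → -1 ≤ n →
      ⁅L m, L n⁆ = ((m - n : ℤ) : ℂ) • L (m + n))
    (hLH : ∀ m n : ℤ, -1 ≤ m → 0 ≤ n →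
      ⁅L m, H n⁆ = (-(b * (m : ℂ) + (n : ℂ) + b)) • H (m + n))
    (hHH : ∀ m n : ℤ, 0 ≤ m → 0 ≤ n → ⁅H m, H n⁆ = 0)
    (a c : ℤ) (ha : 0 ≤ a) (hc : 0 ≤ c) :
    bracketSpan (G L H a c) (G L H a c) ≤ G L H (2 * a + 1) (a + c) := by
  rw [bracketSpan, Submodule.span_le]
  rintro z ⟨x, hx, y, hy, rfl⟩
  refine lie_span_le ?_ x hx y hy
  rintro u (⟨m, hm, hm1, rfl⟩ | ⟨m, hm, hm0, rfl⟩) v (⟨n, hn, hn1, rfl⟩ | ⟨n, hn, hn0, rfl⟩)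
  · -- L L
    rw [hLL m n hm1 hn1]
    rcases eq_or_ne m n with h | h
    · simp [h]
    · apply Submodule.smul_mem
      apply Submodule.subset_span
      refine Or.inl ⟨m + n, ?_, by omega, rfl⟩
      omega
  · -- L H
    rw [hLH m n hm1 hn0]
    apply Submodule.smul_mem
    apply Submodule.subset_span
    exact Or.inr ⟨m + n, by omega, by omega, rfl⟩
  · -- H L
    rw [← lie_skew, hLH n m hn1 hm0]
    rw [← neg_smul]
    apply Submodule.smul_mem
    apply Submodule.subset_span
    exact Or.inr ⟨n + m, by omega, by omega, rfl⟩
  · -- H H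
    rw [hHH m n hm0 hn0]
    exact Submodule.zero_mem _

end DSaux

theorem derivedSeries_le_filtration_b_ne_zero
    (g : Type*) [LieRing g] [LieAlgebra ℂ g] (b : ℂ) (hb : b ≠ 0) (L H : ℤ → g)
    (hH0 : ∀ n : ℤ, n < 0 → H n = 0)
    (hLL : ∀ m n : ℤ, -1 ≤ m → -1 ≤ n →
      ⁅L m, L n⁆ = ((m - n : ℤ) : ℂ) • L (m + n))
    (hLH : ∀ m n : ℤ, -1 ≤ m → 0 ≤ n →
      ⁅L m, H n⁆ = (-(b * (m : ℂ) + (n : ℂ) + b)) • H (m + n))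
    (hHH : ∀ m n : ℤ, 0 ≤ m → 0 ≤ n → ⁅H m, H n⁆ = 0) :
    ∀ n : ℕ, derivedSeq g L H (2 * n) ≤ filtSub g L H n := by
  intro n
  induction n with
  | zero => simp [derivedSeq]
  | succ k ih =>
      rw [DSaux.filt_eq] at ih ⊢
      have h2 : (2 : ℕ) * (k + 1) = 2 * k + 1 + 1 := by ring
      rw [h2]
      have step1 : derivedSeq g L H (2 * k + 1) ≤ DSaux.G L H (2 * k + 1) (2 * k) := by
        calc derivedSeq g L H (2 * k + 1)
            ≤ bracketSpan (DSaux.G L H k k) (DSaux.G L H k k) :=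
              DSaux.bracketSpan_mono ih ih
          _ ≤ DSaux.G L H (2 * (k : ℤ) + 1) ((k : ℤ) + k) :=
              DSaux.bstep b L H hLL hLH hHH k k (by positivity) (by positivity)
          _ ≤ _ := by
              apply DSaux.G_mono L H <;> push_cast <;> omega
      calc derivedSeq g L H (2 * k + 1 + 1)
          ≤ bracketSpan (DSaux.G L H (2 * k + 1) (2 * k)) (DSaux.G L H (2 * k + 1) (2 * k)) :=
            DSaux.bracketSpan_mono step1 step1
        _ ≤ DSaux.G L H (2 * (2 * (k : ℤ) + 1) + 1) ((2 * (k : ℤ) + 1) + 2 * k) := by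
            have := DSaux.bstep b L H hLL hLH hHH (2 * (k : ℤ) + 1) (2 * k)
              (by omega) (by omega)
            exact le_trans (DSaux.bracketSpan_mono (by push_cast; exact le_rfl)
              (by push_cast; exact le_rfl)) this
        _ ≤ DSaux.G L H (↑(k + 1)) (↑(k + 1)) := by
            apply DSaux.G_mono L H <;> push_cast <;> omega
end

section
/- For every Δ, α, β ∈ ℂ, the assignments L_λ v = (∂ + α + Δλ)v and H_λ v = β·δ_{b,0}·v extend to a conformal module structure on M = ℂ[∂]v over W(b); i.e., the conformal module axioms L_λ(L_μ v) - L_μ(L_λ v) = [L_λ L]_{λ+μ} v, L_λ(H_μ v) - H_μ(L_λ v) = [L_λ H]_{λ+μ} v, and H_λ(H_μ v) = H_μ(H_λ v) hold, where [L_λ L] = (∂+2λ)L, [L_λ H] = (∂+(1-b)λ)H, [H_λ H] = 0. -/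
open MvPolynomial

/- We work in R = ℂ[∂, λ, μ] := MvPolynomial (Fin 3) ℂ, with X 0 = ∂, X 1 = λ,
X 2 = μ.  The rank-one module M = ℂ[∂]v is identified with the subspace of
polynomials in ∂, and the λ-action L_λ v = (∂ + α + Δλ)v extends to
L_lam (f(∂)v) = (∂ + α + Δ·lam) f(∂ + lam) v, and similarly
H_lam (f(∂)v) = δ_{b,0} β f(∂ + lam) v. -/

/-- Substitution ∂ ↦ ∂ + lam. -/
noncomputable def shiftD (lam f : MvPolynomial (Fin 3) ℂ) : MvPolynomial (Fin 3) ℂ :=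
  aeval (fun i : Fin 3 => if i = 0 then X 0 + lam else X i) f

lemma shiftD_mul (lam f g : MvPolynomial (Fin 3) ℂ) :
    shiftD lam (f * g) = shiftD lam f * shiftD lam g := by
  simp [shiftD]

lemma shiftD_add (lam f g : MvPolynomial (Fin 3) ℂ) :
    shiftD lam (f + g) = shiftD lam f + shiftD lam g := by
  simp [shiftD]

lemma shiftD_C (lam : MvPolynomial (Fin 3) ℂ) (c : ℂ) :
    shiftD lam (C c) = C c := by
  simp [shiftD]

lemma shiftD_X0 (lam : MvPolynomial (Fin 3) ℂ) :
    shiftD lam (X 0) = X 0 + lam := by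
  simp [shiftD]

lemma shiftD_X1 (lam : MvPolynomial (Fin 3) ℂ) :
    shiftD lam (X 1) = X 1 := by
  simp [shiftD]

lemma shiftD_X2 (lam : MvPolynomial (Fin 3) ℂ) :
    shiftD lam (X 2) = X 2 := by
  simp [shiftD]

lemma shiftD_zero (lam : MvPolynomial (Fin 3) ℂ) : shiftD lam 0 = 0 := by
  simp [shiftD]

lemma shiftD_aeval (lam p : MvPolynomial (Fin 3) ℂ) (q : Polynomial ℂ) :
    shiftD lam (Polynomial.aeval p q) = Polynomial.aeval (shiftD lam p) q := by
  simpa only [shiftD] using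
    (Polynomial.aeval_algHom_apply
      (aeval (fun i : Fin 3 => if i = 0 then X 0 + lam else X i)) p q).symm

theorem Mmod_is_conformal_module (b Δ α β : ℂ) :
    ∀ q : Polynomial ℂ,
      let f : MvPolynomial (Fin 3) ℂ := Polynomial.aeval (X 0) q
      let Lac : MvPolynomial (Fin 3) ℂ → MvPolynomial (Fin 3) ℂ → MvPolynomial (Fin 3) ℂ :=
        fun lam p => (X 0 + C α + C Δ * lam) * shiftD lam p
      let Hac : MvPolynomial (Fin 3) ℂ → MvPolynomial (Fin 3) ℂ → MvPolynomial (Fin 3) ℂ :=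
        fun lam p => (if b = 0 then C β else 0) * shiftD lam p
      -- L_λ(L_μ v) - L_μ(L_λ v) = [L_λ L]_{λ+μ} v, where [L_λ L] = (∂+2λ)L
      Lac (X 1) (Lac (X 2) f) - Lac (X 2) (Lac (X 1) f)
          = (X 1 - X 2) * Lac (X 1 + X 2) f ∧
      -- L_λ(H_μ v) - H_μ(L_λ v) = [L_λ H]_{λ+μ} v, where [L_λ H] = (∂+(1-b)λ)H
      Lac (X 1) (Hac (X 2) f) - Hac (X 2) (Lac (X 1) f)
          = (-(C b * X 1) - X 2) * Hac (X 1 + X 2) f ∧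
      -- H_λ(H_μ v) = H_μ(H_λ v), since [H_λ H] = 0
      Hac (X 1) (Hac (X 2) f) = Hac (X 2) (Hac (X 1) f) := by
  intro q f Lac Hac
  have key : ∀ lam, shiftD lam f = Polynomial.aeval (X 0 + lam) q := fun lam => by
    simp [f, shiftD_aeval, shiftD_X0]
  refine ⟨?_, ?_, ?_⟩
  · simp only [Lac, shiftD_mul, shiftD_add, shiftD_C, shiftD_X0, shiftD_X1, shiftD_X2,
      shiftD_aeval, key, f]
    ring
  · simp only [Lac, Hac]
    split_ifs with hb
    · subst hb
      simp only [map_zero, shiftD_mul, shiftD_add, shiftD_C, shiftD_X0, shiftD_X1, shiftD_X2,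
        shiftD_aeval, key, f]
      ring
    · simp only [shiftD_mul, shiftD_zero, shiftD_add, shiftD_C, shiftD_X0, shiftD_X1, shiftD_X2,
        shiftD_aeval, key, f]
      ring
  · simp only [Hac]
    split_ifs with hb <;>
      simp only [shiftD_mul, shiftD_zero, shiftD_add, shiftD_C, shiftD_X0, shiftD_X1, shiftD_X2,
        shiftD_aeval, key, f] <;> ring
end

section
/- If Δ = β = 0, then the ℂ[∂]-submodule (∂+α)ℂ[∂]v of M_{0,α,0} is a proper nonzero conformal submodule, hence M_{0,α,0} is reducible; moreover this submodule is isomorphic as a conformal module to M_{1,α,0}. -/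
open Polynomial

/- The rank-one conformal module M_{Δ,α,β} = ℂ[∂]v over the Heisenberg-Virasoro
conformal algebra W(0) is identified with ℂ[X] (X = ∂).  The λ-actions, with λ
the outer variable of ℂ[∂][λ] = Polynomial (Polynomial ℂ), are
L_λ (f(∂)v) = (∂ + α + Δλ) f(∂+λ) v and H_λ (f(∂)v) = β f(∂+λ) v. -/

/-- Substitution f(∂) ↦ f(∂+λ) in ℂ[∂][λ]. -/
noncomputable def shP (f : Polynomial ℂ) : Polynomial (Polynomial ℂ) :=
  Polynomial.aeval (Polynomial.C Polynomial.X + Polynomial.X) f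

/-- λ-action of L on M_{Δ,α,β}: L_λ(f(∂)v) = (∂ + α + Δλ) f(∂+λ) v. -/
noncomputable def LA (Δ α : ℂ) (f : Polynomial ℂ) : Polynomial (Polynomial ℂ) :=
  (Polynomial.C (Polynomial.X + Polynomial.C α)
    + Polynomial.C (Polynomial.C Δ) * Polynomial.X) * shP f

/-- λ-action of H on M_{Δ,α,β}: H_λ(f(∂)v) = β f(∂+λ) v. -/
noncomputable def HA (β : ℂ) (f : Polynomial ℂ) : Polynomial (Polynomial ℂ) :=
  Polynomial.C (Polynomial.C β) * shP f

/- If Δ = β = 0, the ℂ[∂]-submodule (∂+α)ℂ[∂]v of M_{0,α,0} is a proper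
nonzero conformal submodule (closed under all coefficients of the λ-actions),
hence M_{0,α,0} is reducible; moreover it is isomorphic as a conformal module
to M_{1,α,0}. -/
lemma shP_mul (f g : Polynomial ℂ) : shP (f * g) = shP f * shP g := by
  simp [shP]

lemma shP_lin (α : ℂ) :
    shP (Polynomial.X + Polynomial.C α)
      = Polynomial.C (Polynomial.X + Polynomial.C α) + Polynomial.X := by
  simp [shP, map_add]
  ring

theorem M_zero_alpha_zero_reducible (α : ℂ) :
    let W : Submodule (Polynomial ℂ) (Polynomial ℂ) :=
      Ideal.span {Polynomial.X + Polynomial.C α}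
    W ≠ ⊥ ∧ W ≠ ⊤ ∧
    (∀ f ∈ W, ∀ j : ℕ, (LA 0 α f).coeff j ∈ W ∧ (HA 0 f).coeff j ∈ W) ∧
    ∃ e : W ≃ₗ[Polynomial ℂ] Polynomial ℂ,
      ∀ (f : W) (j : ℕ) (h : (LA 0 α (f : Polynomial ℂ)).coeff j ∈ W),
        e ⟨(LA 0 α (f : Polynomial ℂ)).coeff j, h⟩ = (LA 1 α (e f)).coeff j ∧
        (HA 0 (e f)).coeff j = 0 := by
  intro W
  have hXα : (Polynomial.X + Polynomial.C α : Polynomial ℂ) ≠ 0 :=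
    Polynomial.X_add_C_ne_zero α
  have hLA0 : ∀ f : Polynomial ℂ,
      LA 0 α f = Polynomial.C (Polynomial.X + Polynomial.C α) * shP f := by
    intro f; simp [LA]
  have hmemW : ∀ g : Polynomial ℂ, (Polynomial.X + Polynomial.C α) * g ∈ W := by
    intro g
    exact Ideal.mul_mem_right _ _ (Ideal.subset_span rfl)
  refine ⟨?_, ?_, ?_, ?_⟩
  · rw [Ne, Ideal.span_singleton_eq_bot]
    exact hXα
  · rw [Ne, Ideal.span_singleton_eq_top]
    intro h
    have := Polynomial.degree_eq_zero_of_isUnit h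
    rw [Polynomial.degree_X_add_C] at this
    exact one_ne_zero this
  · intro f hf j
    constructor
    · rw [hLA0, Polynomial.coeff_C_mul]
      exact hmemW _
    · simp [HA, W]
  · -- construct the isomorphism
    set a : Polynomial ℂ := Polynomial.X + Polynomial.C α with ha
    let m : Polynomial ℂ →ₗ[Polynomial ℂ] Polynomial ℂ :=
      { toFun := fun g => a * g
        map_add' := fun x y => mul_add _ _ _
        map_smul' := fun r x => by simp [smul_eq_mul]; ring }
    have hm : Function.Injective m := fun x y hxy => by
      exact mul_left_cancel₀ hXα hxy
    have hrange : LinearMap.range m = W := by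
      ext g
      simp only [LinearMap.mem_range]
      rw [Ideal.mem_span_singleton (α := Polynomial ℂ)]
      constructor
      · rintro ⟨h, rfl⟩; exact ⟨h, rfl⟩
      · rintro ⟨h, rfl⟩; exact ⟨h, rfl⟩
    let e0 : Polynomial ℂ ≃ₗ[Polynomial ℂ] W :=
      (LinearEquiv.ofInjective m hm).trans (LinearEquiv.ofEq _ _ hrange)
    refine ⟨e0.symm, ?_⟩
    intro f j h
    set g : Polynomial ℂ := e0.symm f with hg
    have hf : (f : Polynomial ℂ) = a * g := by
      have : f = e0 g := (e0.apply_symm_apply f).symm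
      rw [this]; rfl
    have key : LA 0 α (f : Polynomial ℂ)
        = Polynomial.C a * LA 1 α g := by
      rw [hf, hLA0, shP_mul, shP_lin, LA]
      simp only [map_one, one_mul]
    constructor
    · have hcoeff : (LA 0 α (f : Polynomial ℂ)).coeff j
          = a * (LA 1 α g).coeff j := by
        rw [key, Polynomial.coeff_C_mul]
      have : (⟨(LA 0 α (f : Polynomial ℂ)).coeff j, h⟩ : W)
          = e0 ((LA 1 α g).coeff j) := by
        apply Subtype.ext
        simp only [hcoeff]
        rfl
      rw [this, e0.symm_apply_apply]
    · simp [HA]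
end

section
/- If Δ ≠ 0, then the rank-one conformal module M_{Δ,α} = ℂ[∂]v over the Virasoro conformal algebra, with L_λ v = (∂+α+Δλ)v, is irreducible. -/
open Polynomial

lemma shP_eq_comp (f : Polynomial ℂ) :
    shP f = (f.map (C : ℂ →+* Polynomial ℂ)).comp (C X + X) := by
  rw [shP, aeval_def, comp, eval₂_map]
  rfl

lemma natDegree_CXX : (C X + X : Polynomial (Polynomial ℂ)).natDegree = 1 := by
  rw [add_comm]
  simp [natDegree_X_add_C (X : Polynomial ℂ)]

lemma shP_natDegree (f : Polynomial ℂ) : (shP f).natDegree = f.natDegree := by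
  rw [shP_eq_comp, natDegree_comp, natDegree_CXX, natDegree_map_eq_of_injective
    (C_injective : Function.Injective (C : ℂ → Polynomial ℂ)), mul_one]

lemma shP_leadingCoeff (f : Polynomial ℂ) :
    (shP f).leadingCoeff = C f.leadingCoeff := by
  rw [shP_eq_comp, leadingCoeff_comp (by rw [natDegree_CXX]; exact one_ne_zero)]
  have h1 : (C X + X : Polynomial (Polynomial ℂ)).leadingCoeff = 1 := by
    rw [add_comm]; exact leadingCoeff_X_add_C _
  rw [h1, one_pow, mul_one, leadingCoeff_map]

lemma LA_coeff_top (Δ α : ℂ) (f : Polynomial ℂ) :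
    (LA Δ α f).coeff (f.natDegree + 1) = C (Δ * f.leadingCoeff) := by
  have h1 : (shP f).coeff (f.natDegree + 1) = 0 := by
    apply coeff_eq_zero_of_natDegree_lt
    rw [shP_natDegree]; omega
  have h2 : (shP f).coeff f.natDegree = C f.leadingCoeff := by
    rw [← shP_natDegree f, coeff_natDegree, shP_leadingCoeff]
  rw [LA, add_mul, coeff_add, coeff_C_mul, h1, mul_zero, zero_add,
    mul_assoc, coeff_C_mul, coeff_X_mul, h2]
  simp [mul_comm]

/- If Δ ≠ 0, the rank-one conformal module M_{Δ,α} over the Virasoro conformal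
algebra is irreducible: its only ℂ[∂]-submodules closed under all coefficients
of the λ-action are 0 and itself. -/
theorem M_Delta_alpha_irreducible (Δ α : ℂ) (hΔ : Δ ≠ 0) :
    ∀ W : Submodule (Polynomial ℂ) (Polynomial ℂ),
      (∀ f ∈ W, ∀ j : ℕ, (LA Δ α f).coeff j ∈ W) →
      W = ⊥ ∨ W = ⊤ := by
  intro W hW
  by_cases hbot : W = ⊥
  · exact Or.inl hbot
  right
  obtain ⟨f, hfW, hf⟩ := Submodule.exists_mem_ne_zero_of_ne_bot hbot
  have hc : C (Δ * f.leadingCoeff) ∈ W := by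
    have := hW f hfW (f.natDegree + 1)
    rwa [LA_coeff_top] at this
  set c : ℂ := Δ * f.leadingCoeff with hcdef
  have hc0 : c ≠ 0 := mul_ne_zero hΔ (by rwa [leadingCoeff_ne_zero])
  have h1 : (1 : Polynomial ℂ) ∈ W := by
    have := W.smul_mem (C c⁻¹) hc
    rwa [smul_eq_mul, ← C_mul, inv_mul_cancel₀ hc0, C_1] at this
  rw [Submodule.eq_top_iff']
  intro p
  simpa using W.smul_mem p h1
end

section
/- Every finite irreducible conformal module over a Lie conformal algebra is free of finite rank as a ℂ[∂]-module (equivalently, it contains no nonzero torsion element). -/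
/- Every finite irreducible conformal module V over a Lie conformal algebra A
is free of finite rank as a ℂ[∂]-module; equivalently, it contains no nonzero
torsion element.  The Lie conformal algebra and the conformal module are
described via j-products p j : A → A → A and j-actions act j : A → V → V,
with ∂ acting as multiplication by X of ℂ[X] = ℂ[∂]. -/
theorem finite_irreducible_conformal_module_free
    (A V : Type*)
    [AddCommGroup A] [Module (Polynomial ℂ) A]
    [Module ℂ A] [IsScalarTower ℂ (Polynomial ℂ) A]
    [AddCommGroup V] [Module (Polynomial ℂ) V]
    [Module ℂ V] [IsScalarTower ℂ (Polynomial ℂ) V]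
    (p : ℕ → A → A → A) (act : ℕ → A → V → V)
    -- bilinearity of the j-products and j-actions
    (hplin1 : ∀ (n : ℕ) (a : A), IsLinearMap ℂ (p n a))
    (hplin2 : ∀ (n : ℕ) (b : A), IsLinearMap ℂ (fun a => p n a b))
    (hlin1 : ∀ (n : ℕ) (a : A), IsLinearMap ℂ (act n a))
    (hlin2 : ∀ (n : ℕ) (v : V), IsLinearMap ℂ (fun a => act n a v))
    -- locality of the products and of the actions
    (hploc : ∀ (a b : A), ∃ N : ℕ, ∀ n ≥ N, p n a b = 0)
    (hloc : ∀ (a : A) (v : V), ∃ N : ℕ, ∀ n ≥ N, act n a v = 0)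
    -- (∂a)_(n) b = -n a_(n-1) b in A
    (hppa0 : ∀ (a b : A), p 0 ((Polynomial.X : Polynomial ℂ) • a) b = 0)
    (hppa : ∀ (n : ℕ) (a b : A),
      p (n + 1) ((Polynomial.X : Polynomial ℂ) • a) b = (-((n : ℂ) + 1)) • p n a b)
    -- skew-symmetry: a_(n) b = Σ_j (-1)^{n+j+1} (∂^j/j!) (b_(n+j) a)
    (hskew : ∀ (n : ℕ) (a b : A),
      p n a b = ∑ᶠ j : ℕ, ((-1 : ℂ) ^ (n + j + 1) / (j.factorial : ℂ)) •
        (((Polynomial.X : Polynomial ℂ) ^ j) • p (n + j) b a))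
    -- Jacobi identity in terms of j-products
    (hjac : ∀ (m n : ℕ) (a b c : A),
      p m a (p n b c) - p n b (p m a c)
        = ∑ j ∈ Finset.range (m + 1), (m.choose j : ℂ) • p (m + n - j) (p j a b) c)
    -- (∂a)_(n) v = -n a_(n-1) v
    (hpa0 : ∀ (a : A) (v : V), act 0 ((Polynomial.X : Polynomial ℂ) • a) v = 0)
    (hpa : ∀ (n : ℕ) (a : A) (v : V),
      act (n + 1) ((Polynomial.X : Polynomial ℂ) • a) v
        = (-((n : ℂ) + 1)) • act n a v)
    -- a_(n)(∂v) = ∂(a_(n) v) + n a_(n-1) v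
    (hpv0 : ∀ (a : A) (v : V),
      act 0 a ((Polynomial.X : Polynomial ℂ) • v)
        = (Polynomial.X : Polynomial ℂ) • act 0 a v)
    (hpv : ∀ (n : ℕ) (a : A) (v : V),
      act (n + 1) a ((Polynomial.X : Polynomial ℂ) • v)
        = (Polynomial.X : Polynomial ℂ) • act (n + 1) a v + ((n : ℂ) + 1) • act n a v)
    -- the conformal module commutator formula
    (hcomm : ∀ (m n : ℕ) (a b : A) (v : V),
      act m a (act n b v) - act n b (act m a v)
        = ∑ j ∈ Finset.range (m + 1), (m.choose j : ℂ) • act (m + n - j) (p j a b) v)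
    -- V is finite (finitely generated over ℂ[∂])
    (hfin : Module.Finite (Polynomial ℂ) V)
    -- V is nontrivial
    (hnontriv : ∃ (n : ℕ) (a : A) (v : V), act n a v ≠ 0)
    -- V is irreducible: the only conformal submodules are 0 and V
    (hirr : ∀ W : Submodule (Polynomial ℂ) V,
      (∀ (n : ℕ) (a : A), ∀ v ∈ W, act n a v ∈ W) → W = ⊥ ∨ W = ⊤) :
    Module.Free (Polynomial ℂ) V ∧
    ∀ (v : V) (q : Polynomial ℂ), q ≠ 0 → q • v = 0 → v = 0 := by
  classical
  -- Step lemma: uniform form of the ∂-compatibility of the actions.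
  have step : ∀ (m : ℕ) (a : A) (w : V),
      act m a ((Polynomial.X : Polynomial ℂ) • w)
        = (Polynomial.X : Polynomial ℂ) • act m a w + (m : ℂ) • act (m - 1) a w := by
    intro m a w
    cases m with
    | zero => simp [hpv0]
    | succ k =>
      rw [hpv k a w]
      push_cast
      ring_nf
  -- Key lemma: any torsion element is annihilated by all the actions.
  have key : ∀ (q : Polynomial ℂ), q ≠ 0 → ∀ (v : V), q • v = 0 →
      ∀ (m : ℕ) (a : A), act m a v = 0 := by
    intro q hq v hqv m a
    by_contra hma
    obtain ⟨N, hN⟩ := hloc a v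
    have hmN : m ≤ N := by
      by_contra h
      exact hma (hN m (le_of_lt (lt_of_not_ge h)))
    set P : ℕ → Prop := fun n => act n a v ≠ 0 with hP
    have hPm : P m := hma
    set n := Nat.findGreatest P N with hn
    have hPn : P n := Nat.findGreatest_spec hmN hPm
    have hH : ∀ i, n < i → act i a v = 0 := by
      intro i hi
      by_cases hiN : i ≤ N
      · by_contra h
        exact Nat.findGreatest_is_greatest hi hiN h
      · exact hN i (le_of_lt (lt_of_not_ge hiN))
    -- joint induction
    have L : ∀ k : ℕ,
        (∀ m', n + k < m' →
          act m' a (((Polynomial.X : Polynomial ℂ) ^ k) • v) = 0) ∧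
        (∃ c : ℂ, c ≠ 0 ∧
          act (n + k) a (((Polynomial.X : Polynomial ℂ) ^ k) • v) = c • act n a v) := by
      intro k
      induction k with
      | zero =>
        constructor
        · intro m' hm'
          simpa using hH m' (by simpa using hm')
        · exact ⟨1, one_ne_zero, by simp⟩
      | succ k ih =>
        have hx : ((Polynomial.X : Polynomial ℂ) ^ (k + 1)) • v
            = (Polynomial.X : Polynomial ℂ) • (((Polynomial.X : Polynomial ℂ) ^ k) • v) := by
          rw [smul_smul, ← pow_succ']
        constructor
        · intro m' hm'
          rw [hx, step]
          rw [ih.1 m' (by omega), ih.1 (m' - 1) (by omega)]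
          simp
        · obtain ⟨c, hc, hcv⟩ := ih.2
          refine ⟨((n : ℂ) + (k : ℂ) + 1) * c, ?_, ?_⟩
          · apply mul_ne_zero _ hc
            have : ((n : ℂ) + (k : ℂ) + 1) = ((n + k + 1 : ℕ) : ℂ) := by push_cast; ring
            rw [this]
            exact Nat.cast_ne_zero.mpr (Nat.succ_ne_zero _)
          · rw [hx, step]
            rw [ih.1 (n + (k + 1)) (by omega)]
            have h1 : n + (k + 1) - 1 = n + k := by omega
            rw [h1, hcv, smul_zero, zero_add, smul_smul]
            congr 1
            push_cast
            ring
    -- now derive the contradiction using q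
    set d := q.natDegree with hd
    have hexp : q = ∑ i ∈ Finset.range (d + 1), Polynomial.monomial i (q.coeff i) := by
      exact (Polynomial.as_sum_range' q (d + 1) (Nat.lt_succ_self d))
    have hsmul : ∀ (i : ℕ) (c : ℂ),
        (Polynomial.monomial i c : Polynomial ℂ) • v
          = c • (((Polynomial.X : Polynomial ℂ) ^ i) • v) := by
      intro i c
      rw [← Polynomial.smul_X_eq_monomial, smul_assoc]
    have hact0 : act (n + d) a (q • v) = 0 := by rw [hqv]; exact (hlin1 (n + d) a).map_zero
    have hsum : act (n + d) a (q • v)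
        = ∑ i ∈ Finset.range (d + 1),
            q.coeff i • act (n + d) a (((Polynomial.X : Polynomial ℂ) ^ i) • v) := by
      conv_lhs => rw [hexp]
      rw [Finset.sum_smul]
      have := map_sum (IsLinearMap.mk' (act (n + d) a) (hlin1 (n + d) a))
        (fun i => (Polynomial.monomial i (q.coeff i) : Polynomial ℂ) • v)
        (Finset.range (d + 1))
      simp only [IsLinearMap.mk'_apply] at this
      rw [this]
      apply Finset.sum_congr rfl
      intro i _
      rw [hsmul]
      exact (hlin1 (n + d) a).map_smul _ _
    obtain ⟨c, hc, hcv⟩ := (L d).2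
    have hvanish : ∀ i ∈ Finset.range d,
        q.coeff i • act (n + d) a (((Polynomial.X : Polynomial ℂ) ^ i) • v) = 0 := by
      intro i hi
      rw [(L i).1 (n + d) (by have := Finset.mem_range.mp hi; omega), smul_zero]
    have : (0 : V) = (q.coeff d * c) • act n a v := by
      rw [← hact0, hsum, Finset.sum_range_succ, Finset.sum_eq_zero hvanish, zero_add,
        hcv, smul_smul]
    have hcoeff : q.coeff d ≠ 0 := by
      rw [hd]
      exact Polynomial.leadingCoeff_ne_zero.mpr hq
    have : act n a v = 0 := by
      have h2 := this.symm
      rwa [smul_eq_zero_iff_right (mul_ne_zero hcoeff hc)] at h2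
    exact hPn this
  -- torsion submodule is conformal-invariant
  have hWinv : ∀ (m : ℕ) (a : A), ∀ v ∈ Submodule.torsion (Polynomial ℂ) V,
      act m a v ∈ Submodule.torsion (Polynomial ℂ) V := by
    intro m a v hv
    obtain ⟨⟨q, hq⟩, hqv⟩ := (Submodule.mem_torsion_iff v).mp hv
    have hq0 : q ≠ 0 := mem_nonZeroDivisors_iff_ne_zero.mp hq
    rw [key q hq0 v hqv m a]
    exact Submodule.zero_mem _
  have hW : Submodule.torsion (Polynomial ℂ) V = ⊥ := by
    rcases hirr _ hWinv with h | h
    · exact h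
    · exfalso
      obtain ⟨m, a, v, hv⟩ := hnontriv
      have hvt : v ∈ Submodule.torsion (Polynomial ℂ) V := by rw [h]; trivial
      obtain ⟨⟨q, hq⟩, hqv⟩ := (Submodule.mem_torsion_iff v).mp hvt
      exact hv (key q (mem_nonZeroDivisors_iff_ne_zero.mp hq) v hqv m a)
  have htf : ∀ (v : V) (q : Polynomial ℂ), q ≠ 0 → q • v = 0 → v = 0 := by
    intro v q hq hqv
    have : v ∈ Submodule.torsion (Polynomial ℂ) V :=
      (Submodule.mem_torsion_iff v).mpr ⟨⟨q, mem_nonZeroDivisors_iff_ne_zero.mpr hq⟩, hqv⟩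
    rw [hW] at this
    simpa using this
  have : NoZeroSMulDivisors (Polynomial ℂ) V := by
    constructor
    intro q v h
    by_cases hq : q = 0
    · exact Or.inl hq
    · exact Or.inr (htf v q hq h)
  exact ⟨Module.free_of_finite_type_torsion_free', htf⟩
end
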